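/- Over F_3, the power series Δ^{(9^s-1)/8} (where Δ = q·∏_{n≥1}(1-q^n)^{24}) equals q^{(9^s-1)/8} · ∏_{n≥1}(1 - q^{3·9^s n}) · ∏_{n≥1} 1/(1-q^{3n}). -/

import Mathlib

open PowerSeries Finset

instance : Fact (Nat.Prime 3) := ⟨by norm_num⟩

/-- The discriminant modular form `Δ = q·∏_{n≥1}(1-qⁿ)^{24}` as a formal power
series over `ℤ`, defined coefficientwise via the stabilized partial products. -/
noncomputable def Delta : PowerSeries ℤ :=
  PowerSeries.mk fun n =>
    PowerSeries.coeff (R := ℤ) n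
      (PowerSeries.X * ∏ k ∈ Finset.range (n + 1), (1 - (PowerSeries.X : PowerSeries ℤ) ^ (k + 1)) ^ 24)

instance : CharP (PowerSeries (ZMod 3)) 3 :=
  charP_of_injective_ringHom (f := (PowerSeries.C (R := ZMod 3)))
    (fun a b h => by
      have := congrArg ((PowerSeries.constantCoeff (R := ZMod 3))) h
      simpa using this) 3

lemma dvd_prod_sub_one {R : Type*} [CommRing R] (a : R) (s : Finset ℕ) (f : ℕ → R)
    (h : ∀ k ∈ s, a ∣ f k - 1) : a ∣ (∏ k ∈ s, f k) - 1 := by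
  classical
  induction s using Finset.induction with
  | empty => simp
  | @insert x s hx ih =>
    rw [Finset.prod_insert hx]
    have h1 := h _ (Finset.mem_insert_self x s)
    have h2 := ih (fun k hk => h k (Finset.mem_insert_of_mem hk))
    have he : f x * ∏ k ∈ s, f k - 1 = f x * ((∏ k ∈ s, f k) - 1) + (f x - 1) := by ring
    rw [he]
    exact dvd_add (Dvd.dvd.mul_left h2 _) h1

lemma coeff_stab {R : Type*} [CommRing R] (i N : ℕ) (h : i ≤ N) :
    PowerSeries.coeff (R := R) i (PowerSeries.X * ∏ k ∈ Finset.range (N + 1),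
      (1 - (PowerSeries.X : PowerSeries R) ^ (k + 1)) ^ 24) =
    PowerSeries.coeff (R := R) i (PowerSeries.X * ∏ k ∈ Finset.range (i + 1),
      (1 - (PowerSeries.X : PowerSeries R) ^ (k + 1)) ^ 24) := by
  set f : ℕ → PowerSeries R := fun k => (1 - (PowerSeries.X : PowerSeries R) ^ (k + 1)) ^ 24 with hf
  have hsplit : (∏ k ∈ Finset.range (i + 1), f k) * ∏ k ∈ Finset.Ico (i + 1) (N + 1), f k
      = ∏ k ∈ Finset.range (N + 1), f k :=
    Finset.prod_range_mul_prod_Ico f (by omega)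
  have hIco : (PowerSeries.X : PowerSeries R) ^ i ∣ (∏ k ∈ Finset.Ico (i + 1) (N + 1), f k) - 1 := by
    apply dvd_prod_sub_one
    intro k hk
    have hk' : i + 1 ≤ k := (Finset.mem_Ico.mp hk).1
    have h1 : (PowerSeries.X : PowerSeries R) ^ i ∣ (1 - (PowerSeries.X : PowerSeries R) ^ (k+1)) - 1 := by
      have he : (1 - (PowerSeries.X : PowerSeries R) ^ (k+1)) - 1 = -(X ^ (k+1)) := by ring
      rw [he]
      exact (pow_dvd_pow X (by omega)).neg_right
    have h2 : ((1 - (PowerSeries.X : PowerSeries R) ^ (k+1)) - 1) ∣ f k - 1 := by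
      simpa using sub_dvd_pow_sub_pow (1 - (PowerSeries.X : PowerSeries R) ^ (k+1)) 1 24
    exact h1.trans h2
  have hdvd : (PowerSeries.X : PowerSeries R) ^ (i + 1) ∣
      (PowerSeries.X * ∏ k ∈ Finset.range (N + 1), f k)
        - PowerSeries.X * ∏ k ∈ Finset.range (i + 1), f k := by
    rw [← mul_sub, ← hsplit, pow_succ, mul_comm (X ^ i) X]
    apply mul_dvd_mul_left
    have he : (∏ k ∈ Finset.range (i + 1), f k) * (∏ k ∈ Finset.Ico (i + 1) (N + 1), f k)
        - ∏ k ∈ Finset.range (i + 1), f k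
        = (∏ k ∈ Finset.range (i + 1), f k) * ((∏ k ∈ Finset.Ico (i + 1) (N + 1), f k) - 1) := by
      ring
    rw [he]
    exact hIco.mul_left _
  have h0 := PowerSeries.X_pow_dvd_iff.mp hdvd i (by omega)
  rw [map_sub, sub_eq_zero] at h0
  exact h0

/-- Over `F₃`, `Δ^{(9^s-1)/8} = q^{(9^s-1)/8} · ∏_{n≥1}(1-q^{3·9^s n}) · ∏_{n≥1} 1/(1-q^{3n})`,
stated coefficientwise via stabilized partial products (with the power series inverse over the
field `F₃`). -/
theorem delta_pow_mod_three (s : ℕ) (hs : 0 < s) :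
    ∀ d : ℕ,
      PowerSeries.coeff (R := ZMod 3) d
        ((PowerSeries.map (Int.castRingHom (ZMod 3)) Delta) ^ ((9 ^ s - 1) / 8)) =
      PowerSeries.coeff (R := ZMod 3) d
        ((PowerSeries.X : PowerSeries (ZMod 3)) ^ ((9 ^ s - 1) / 8) *
          (∏ n ∈ Finset.range (d + 1),
            (1 - (PowerSeries.X : PowerSeries (ZMod 3)) ^ (3 * 9 ^ s * (n + 1)))) *
          (∏ n ∈ Finset.range (d + 1),
            (1 - (PowerSeries.X : PowerSeries (ZMod 3)) ^ (3 * (n + 1))))⁻¹) := by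
  intro d
  set m := (9 ^ s - 1) / 8 with hm_def
  set R := ZMod 3
  -- arithmetic facts
  have h8 : 8 ∣ 9 ^ s - 1 := by simpa using Nat.sub_dvd_pow_sub_pow 9 1 s
  have h9 : 1 ≤ 9 ^ s := Nat.one_le_pow _ _ (by norm_num)
  have hm : 24 * m = 3 * (9 ^ s - 1) := by
    have h := Nat.div_mul_cancel h8
    omega
  have hexp : 24 * m + 3 = 3 * 9 ^ s := by omega
  have hpow : 3 * 9 ^ s = 3 ^ (2 * s + 1) := by
    rw [pow_succ, pow_mul]
    norm_num
    ring
  -- Frobenius identities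
  have frob : ∀ j : ℕ, (1 - (PowerSeries.X : PowerSeries R) ^ j) ^ (3 * 9 ^ s)
      = 1 - (PowerSeries.X : PowerSeries R) ^ (3 * 9 ^ s * j) := by
    intro j
    rw [hpow]
    rw [sub_pow_char_pow (p := 3)]
    rw [one_pow, ← pow_mul, mul_comm]
  have frob1 : ∀ j : ℕ, (1 - (PowerSeries.X : PowerSeries R) ^ j) ^ 3
      = 1 - (PowerSeries.X : PowerSeries R) ^ (3 * j) := by
    intro j
    have := sub_pow_char_pow (p := 3) (1 : PowerSeries R) (X ^ j) 1
    simpa [pow_one, ← pow_mul, mul_comm] using this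
  -- key factor identity
  have key : ∀ k : ℕ, (1 - (PowerSeries.X : PowerSeries R) ^ (k + 1)) ^ (24 * m)
      * (1 - (PowerSeries.X : PowerSeries R) ^ (3 * (k + 1)))
      = 1 - (PowerSeries.X : PowerSeries R) ^ (3 * 9 ^ s * (k + 1)) := by
    intro k
    rw [← frob1, ← pow_add, hexp, frob]
  set A : PowerSeries R := ∏ n ∈ Finset.range (d + 1),
    (1 - (PowerSeries.X : PowerSeries R) ^ (3 * 9 ^ s * (n + 1))) with hA
  set B : PowerSeries R := ∏ n ∈ Finset.range (d + 1),
    (1 - (PowerSeries.X : PowerSeries R) ^ (3 * (n + 1))) with hB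
  have hAB : (∏ k ∈ Finset.range (d + 1),
      (1 - (PowerSeries.X : PowerSeries R) ^ (k + 1)) ^ (24 * m)) * B = A := by
    rw [hA, hB, ← Finset.prod_mul_distrib]
    exact Finset.prod_congr rfl fun k _ => key k
  have hBc : (PowerSeries.constantCoeff (R := R)) B ≠ 0 := by
    rw [hB, map_prod]
    have : ∀ n ∈ Finset.range (d + 1),
        (PowerSeries.constantCoeff (R := R)) (1 - (PowerSeries.X : PowerSeries R) ^ (3 * (n + 1))) = 1 := by
      intro n _
      simp [zero_pow]
    rw [Finset.prod_congr rfl this]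
    simp
  have hBinv : B * B⁻¹ = 1 := PowerSeries.mul_inv_cancel B hBc
  -- RHS equals (X * ∏ (1-X^{k+1})^24)^m
  set Q : PowerSeries R := PowerSeries.X * ∏ k ∈ Finset.range (d + 1),
    (1 - (PowerSeries.X : PowerSeries R) ^ (k + 1)) ^ 24 with hQ
  have hRHS : (PowerSeries.X : PowerSeries R) ^ m * A * B⁻¹ = Q ^ m := by
    rw [← hAB, hQ, mul_pow, ← Finset.prod_pow]
    have : ∀ k, ((1 - (PowerSeries.X : PowerSeries R) ^ (k + 1)) ^ 24) ^ m
        = (1 - (PowerSeries.X : PowerSeries R) ^ (k + 1)) ^ (24 * m) := fun k => by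
      rw [← pow_mul]
    simp_rw [this]
    calc (PowerSeries.X : PowerSeries R) ^ m
          * ((∏ k ∈ Finset.range (d + 1),
              (1 - (PowerSeries.X : PowerSeries R) ^ (k + 1)) ^ (24 * m)) * B) * B⁻¹
        = (PowerSeries.X : PowerSeries R) ^ m
          * (∏ k ∈ Finset.range (d + 1),
              (1 - (PowerSeries.X : PowerSeries R) ^ (k + 1)) ^ (24 * m)) * (B * B⁻¹) := by ring
      _ = _ := by rw [hBinv, mul_one]
  -- LHS: map Delta agrees with Q up to degree d
  have hcoeff : ∀ i : ℕ, i ≤ d →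
      PowerSeries.coeff (R := R) i (PowerSeries.map (Int.castRingHom R) Delta)
        = PowerSeries.coeff (R := R) i Q := by
    intro i hi
    rw [PowerSeries.coeff_map]
    have h1 : PowerSeries.coeff (R := ℤ) i Delta
        = PowerSeries.coeff (R := ℤ) i (PowerSeries.X * ∏ k ∈ Finset.range (i + 1),
            (1 - (PowerSeries.X : PowerSeries ℤ) ^ (k + 1)) ^ 24) := by
      simp [Delta]
    rw [h1]
    have h2 : (Int.castRingHom R) (PowerSeries.coeff (R := ℤ) i (PowerSeries.X * ∏ k ∈ Finset.range (i + 1),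
            (1 - (PowerSeries.X : PowerSeries ℤ) ^ (k + 1)) ^ 24))
        = PowerSeries.coeff (R := R) i (PowerSeries.map (Int.castRingHom R)
            (PowerSeries.X * ∏ k ∈ Finset.range (i + 1),
              (1 - (PowerSeries.X : PowerSeries ℤ) ^ (k + 1)) ^ 24)) := by
      rw [PowerSeries.coeff_map]
    rw [h2]
    have h3 : PowerSeries.map (Int.castRingHom R)
        (PowerSeries.X * ∏ k ∈ Finset.range (i + 1),
          (1 - (PowerSeries.X : PowerSeries ℤ) ^ (k + 1)) ^ 24)
        = PowerSeries.X * ∏ k ∈ Finset.range (i + 1),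
          (1 - (PowerSeries.X : PowerSeries R) ^ (k + 1)) ^ 24 := by
      rw [map_mul, map_prod]
      simp [PowerSeries.map_X]
    rw [h3, hQ]
    exact (coeff_stab i d hi).symm
  have hdvd : (PowerSeries.X : PowerSeries R) ^ (d + 1) ∣
      (PowerSeries.map (Int.castRingHom R) Delta) - Q := by
    rw [PowerSeries.X_pow_dvd_iff]
    intro j hj
    rw [map_sub, hcoeff j (by omega), sub_self]
  have hdvd2 : (PowerSeries.X : PowerSeries R) ^ (d + 1) ∣
      (PowerSeries.map (Int.castRingHom R) Delta) ^ m - Q ^ m :=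
    hdvd.trans (sub_dvd_pow_sub_pow _ _ m)
  have h0 := PowerSeries.X_pow_dvd_iff.mp hdvd2 d (by omega)
  rw [map_sub, sub_eq_zero] at h0
  rw [h0, ← hRHS]
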